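/- For 1 < p < 3, let q = 1/(p-1) and for Λ > 0, 0 < r < R_Λ = √(3/Λ), define φ_q(r) = (r^{2q-1}/√(1-(Λ/3)r²)) · ∫_r^{R_Λ} ρ^{-2q}(1-(Λ/3)ρ²)^{-1/2} dρ. Then the recursive relation (2q+1)·φ_{q+1}(r) = 2q·φ_q(r)·(Λ/3)r² + 1 holds for all r ∈ (0, R_Λ). -/

import Mathlib

open Real Filter MeasureTheory

/-- The auxiliary function `φ_q`. -/
noncomputable def phiAux (Λ q r : ℝ) : ℝ :=
  r ^ (2 * q - 1) / Real.sqrt (1 - Λ / 3 * r ^ 2) *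
    ∫ ρ in r..Real.sqrt (3 / Λ), ρ ^ (-(2 * q)) / Real.sqrt (1 - Λ / 3 * ρ ^ 2)

lemma integrable_aux (Λ : ℝ) (hΛ : 0 < Λ) (a r : ℝ) (hr0 : 0 < r)
    (hrR : r < Real.sqrt (3 / Λ)) :
    IntervalIntegrable (fun ρ => ρ ^ a / Real.sqrt (1 - Λ / 3 * ρ ^ 2)) volume r
      (Real.sqrt (3 / Λ)) := by
  set R := Real.sqrt (3 / Λ) with hRdef
  have hR0 : 0 < R := lt_trans hr0 hrR
  have hR2 : R ^ 2 = 3 / Λ := Real.sq_sqrt (by positivity)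
  have hR1 : Λ / 3 * R ^ 2 = 1 := by rw [hR2]; field_simp
  have hc : 0 < Λ / 3 * R := by positivity
  obtain ⟨K, hK⟩ : ∃ K, ∀ x ∈ Set.Icc r R, ‖x ^ a‖ ≤ K := by
    apply (isCompact_Icc).exists_bound_of_continuousOn
    intro x hx
    exact (Real.continuousAt_rpow_const x a
      (Or.inl (lt_of_lt_of_le hr0 hx.1).ne')).continuousWithinAt
  have hK0 : 0 ≤ K := le_trans (norm_nonneg _) (hK r ⟨le_refl r, hrR.le⟩)
  have hmaj : IntervalIntegrable (fun ρ => K / Real.sqrt (Λ / 3 * R) * (R - ρ) ^ (-(1/2) : ℝ))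
      volume r R := by
    have h1 : IntervalIntegrable (fun x : ℝ => x ^ (-(1/2) : ℝ)) volume (R - r) 0 :=
      intervalIntegral.intervalIntegrable_rpow' (by norm_num)
    have h2 := (h1.comp_sub_left R).const_mul (K / Real.sqrt (Λ / 3 * R))
    simpa using h2
  apply hmaj.mono_fun
  · apply Measurable.aestronglyMeasurable
    apply Measurable.div
    · fun_prop
    · exact (measurable_const.sub ((measurable_id.pow_const 2).const_mul _)).sqrt
  · rw [Set.uIoc_of_le hrR.le]
    filter_upwards [ae_restrict_mem measurableSet_Ioc] with ρ hρ
    have hρ0 : 0 < ρ := lt_trans hr0 hρ.1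
    have hKρ : ‖ρ ^ a‖ ≤ K := hK ρ ⟨hρ.1.le, hρ.2⟩
    rcases eq_or_lt_of_le hρ.2 with h | h
    · have hz : (1 - Λ / 3 * ρ ^ 2) = 0 := by rw [h]; linarith
      simp only [norm_div, hz, Real.sqrt_zero, norm_zero, div_zero]
      positivity
    · have h1' : Λ / 3 * ρ ^ 2 < 1 := by nlinarith
      have hu : 0 < 1 - Λ / 3 * ρ ^ 2 := by linarith
      have hRρ : 0 < R - ρ := by linarith
      have hs0 : 0 < Real.sqrt (1 - Λ / 3 * ρ ^ 2) := Real.sqrt_pos.2 hu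
      have hlow : Real.sqrt (Λ / 3 * R) * Real.sqrt (R - ρ) ≤
          Real.sqrt (1 - Λ / 3 * ρ ^ 2) := by
        rw [← Real.sqrt_mul hc.le]
        apply Real.sqrt_le_sqrt
        nlinarith
      have hrpow : (R - ρ) ^ (-(1/2) : ℝ) = (Real.sqrt (R - ρ))⁻¹ := by
        rw [Real.rpow_neg hRρ.le, Real.sqrt_eq_rpow]
      have hpos : 0 < Real.sqrt (Λ / 3 * R) * Real.sqrt (R - ρ) := by positivity
      rw [norm_div, Real.norm_of_nonneg hs0.le, hrpow,
        Real.norm_of_nonneg (by positivity :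
          (0:ℝ) ≤ K / Real.sqrt (Λ / 3 * R) * (Real.sqrt (R - ρ))⁻¹),
        ← div_eq_mul_inv, div_div]
      exact div_le_div₀ hK0 hKρ hpos hlow

lemma deriv_aux (Λ q : ℝ) (ρ : ℝ) (hρ0 : 0 < ρ) (hu : 0 < 1 - Λ / 3 * ρ ^ 2) :
    HasDerivAt (fun x => x ^ (-(2 * q + 1)) * Real.sqrt (1 - Λ / 3 * x ^ 2))
      (2 * q * (Λ / 3) * (ρ ^ (-(2 * q)) / Real.sqrt (1 - Λ / 3 * ρ ^ 2))
        - (2 * q + 1) * (ρ ^ (-(2 * (q + 1))) / Real.sqrt (1 - Λ / 3 * ρ ^ 2))) ρ := by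
  have h1 : HasDerivAt (fun x : ℝ => x ^ (-(2 * q + 1)))
      (-(2 * q + 1) * ρ ^ (-(2 * q + 1) - 1)) ρ :=
    Real.hasDerivAt_rpow_const (Or.inl hρ0.ne')
  have h2 : HasDerivAt (fun x : ℝ => 1 - Λ / 3 * x ^ 2) (-(Λ / 3 * (2 * ρ))) ρ := by
    have := ((hasDerivAt_pow 2 ρ).const_mul (Λ / 3)).const_sub 1
    simpa using this
  have h3 := h2.sqrt hu.ne'
  have h := h1.mul h3
  refine h.congr_deriv ?_
  symm
  set s := Real.sqrt (1 - Λ / 3 * ρ ^ 2) with hsdef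
  have hs : s ^ 2 = 1 - Λ / 3 * ρ ^ 2 := Real.sq_sqrt hu.le
  have hs0 : 0 < s := Real.sqrt_pos.2 hu
  have e1 : ρ ^ (-(2 * q + 1) - 1) = ρ ^ (-(2 * q)) * ρ⁻¹ * ρ⁻¹ := by
    rw [show -(2 * q + 1) - 1 = -(2 * q) + (-1) + (-1) by ring,
      Real.rpow_add hρ0, Real.rpow_add hρ0, Real.rpow_neg_one]
  have e2 : ρ ^ (-(2 * q + 1)) = ρ ^ (-(2 * q)) * ρ⁻¹ := by
    rw [show -(2 * q + 1) = -(2 * q) + (-1) by ring, Real.rpow_add hρ0, Real.rpow_neg_one]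
  have e3 : ρ ^ (-(2 * (q + 1))) = ρ ^ (-(2 * q)) * ρ⁻¹ * ρ⁻¹ := by
    rw [show -(2 * (q + 1)) = -(2 * q) + (-1) + (-1) by ring,
      Real.rpow_add hρ0, Real.rpow_add hρ0, Real.rpow_neg_one]
  rw [e1, e2, e3]
  field_simp
  ring_nf
  linear_combination (6*q+3) * hs

/-- The recursive relation `(2q+1) φ_{q+1}(r) = 2q φ_q(r) (Λ/3) r² + 1`. -/
theorem stmt_4 (Λ p q : ℝ) (hΛ : 0 < Λ) (hp1 : 1 < p) (hp3 : p < 3)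
    (hq : q = 1 / (p - 1)) (r : ℝ) (hr0 : 0 < r) (hrR : r < Real.sqrt (3 / Λ)) :
    (2 * q + 1) * phiAux Λ (q + 1) r = 2 * q * phiAux Λ q r * (Λ / 3 * r ^ 2) + 1 := by
  set R := Real.sqrt (3 / Λ) with hRdef
  have hR0 : 0 < R := lt_trans hr0 hrR
  have hR2 : R ^ 2 = 3 / Λ := Real.sq_sqrt (by positivity)
  have hR1 : Λ / 3 * R ^ 2 = 1 := by rw [hR2]; field_simp
  have hur : 0 < 1 - Λ / 3 * r ^ 2 := by nlinarith
  set s := Real.sqrt (1 - Λ / 3 * r ^ 2) with hsdef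
  have hs0 : 0 < s := Real.sqrt_pos.2 hur
  -- FTC
  have hcont : ContinuousOn (fun x => x ^ (-(2 * q + 1)) * Real.sqrt (1 - Λ / 3 * x ^ 2))
      (Set.Icc r R) := by
    intro x hx
    have hx0 : 0 < x := lt_of_lt_of_le hr0 hx.1
    exact ((Real.continuousAt_rpow_const x _ (Or.inl hx0.ne')).mul
      ((Real.continuous_sqrt.comp (by continuity)).continuousAt)).continuousWithinAt
  have hderiv : ∀ x ∈ Set.Ioo r R,
      HasDerivWithinAt (fun x => x ^ (-(2 * q + 1)) * Real.sqrt (1 - Λ / 3 * x ^ 2))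
        (2 * q * (Λ / 3) * (x ^ (-(2 * q)) / Real.sqrt (1 - Λ / 3 * x ^ 2))
          - (2 * q + 1) * (x ^ (-(2 * (q + 1))) / Real.sqrt (1 - Λ / 3 * x ^ 2)))
        (Set.Ioi x) x := by
    intro x hx
    have hx0 : 0 < x := lt_trans hr0 hx.1
    have hux : 0 < 1 - Λ / 3 * x ^ 2 := by nlinarith [hx.2, hx0]
    exact (deriv_aux Λ q x hx0 hux).hasDerivWithinAt
  have hint1 := integrable_aux Λ hΛ (-(2 * q)) r hr0 hrR
  have hint2 := integrable_aux Λ hΛ (-(2 * (q + 1))) r hr0 hrR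
  have hint : IntervalIntegrable
      (fun x => 2 * q * (Λ / 3) * (x ^ (-(2 * q)) / Real.sqrt (1 - Λ / 3 * x ^ 2))
        - (2 * q + 1) * (x ^ (-(2 * (q + 1))) / Real.sqrt (1 - Λ / 3 * x ^ 2)))
      volume r R :=
    (hint1.const_mul _).sub (hint2.const_mul _)
  have key := intervalIntegral.integral_eq_sub_of_hasDeriv_right_of_le hrR.le hcont hderiv hint
  rw [intervalIntegral.integral_sub (hint1.const_mul _) (hint2.const_mul _),
    intervalIntegral.integral_const_mul, intervalIntegral.integral_const_mul] at key
  set I₁ := ∫ ρ in r..R, ρ ^ (-(2 * q)) / Real.sqrt (1 - Λ / 3 * ρ ^ 2) with hI₁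
  set I₂ := ∫ ρ in r..R, ρ ^ (-(2 * (q + 1))) / Real.sqrt (1 - Λ / 3 * ρ ^ 2) with hI₂
  have hFR : R ^ (-(2 * q + 1)) * Real.sqrt (1 - Λ / 3 * R ^ 2) = 0 := by
    rw [show (1 - Λ / 3 * R ^ 2) = 0 by linarith, Real.sqrt_zero, mul_zero]
  rw [hFR] at key
  have key2 : (2 * q + 1) * I₂ = 2 * q * (Λ / 3) * I₁ + r ^ (-(2 * q + 1)) * s := by
    linarith [key]
  have expand : r ^ (2 * q + 1) = r ^ (2 * q - 1) * r ^ 2 := by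
    rw [show 2 * q + 1 = (2 * q - 1) + 2 by ring, Real.rpow_add hr0, Real.rpow_two]
  have cancel : r ^ (2 * q + 1) * r ^ (-(2 * q + 1)) = 1 := by
    rw [← Real.rpow_add hr0, show 2 * q + 1 + -(2 * q + 1) = (0:ℝ) by ring, Real.rpow_zero]
  simp only [phiAux, ← hRdef, ← hsdef, ← hI₁, ← hI₂]
  rw [show 2 * (q + 1) - 1 = 2 * q + 1 by ring]
  calc (2 * q + 1) * (r ^ (2 * q + 1) / s * I₂)
      = r ^ (2 * q + 1) / s * ((2 * q + 1) * I₂) := by ring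
    _ = r ^ (2 * q + 1) / s * (2 * q * (Λ / 3) * I₁ + r ^ (-(2 * q + 1)) * s) := by rw [key2]
    _ = 2 * q * (r ^ (2 * q - 1) / s * I₁) * (Λ / 3 * r ^ 2)
        + (r ^ (2 * q + 1) * r ^ (-(2 * q + 1))) * (s / s) := by rw [expand]; ring
    _ = 2 * q * (r ^ (2 * q - 1) / s * I₁) * (Λ / 3 * r ^ 2) + 1 := by
        rw [cancel, div_self hs0.ne', one_mul]
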